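/- For p > 1, every minimizer u = (u_1,…,u_k) of G(v) = Σ_{i=2}^k |v_i - v_{i-1}| + λ Σ_{i=1}^k L_i |f_i - v_i|^p satisfies min_i f_i ≤ u_j ≤ max_i f_i for all j. -/
import Mathlib


/-- Predecessor index: `i - 1` (and `0` maps to `0`). -/
def pred {k : ℕ} (i : Fin k) : Fin k :=
  ⟨i.val - 1, Nat.lt_of_le_of_lt (Nat.sub_le _ _) i.isLt⟩

/-- The discrete energy `G(v) = ∑_{i≥2} |v_i - v_{i-1}| + λ ∑_i L_i |f_i - v_i|^p`
(indices written with `Fin k`, i.e. `0,…,k-1`). -/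
noncomputable def G (k : ℕ) (lam p : ℝ) (L f : Fin k → ℝ) (v : Fin k → ℝ) : ℝ :=
  (∑ i : Fin k, if i.val = 0 then 0 else |v i - v (pred i)|) +
    lam * ∑ i : Fin k, L i * |f i - v i| ^ p

/-- for `p > 1`, every minimizer of `G` takes values between the
minimum and the maximum of `f`. -/
theorem stmt5 (k : ℕ) (hk : 1 ≤ k) (lam p : ℝ) (hlam : 0 < lam) (hp : 1 < p)
    (L f : Fin k → ℝ) (hL : ∀ i, 0 < L i)
    (u : Fin k → ℝ) (hu : ∀ v : Fin k → ℝ, G k lam p L f u ≤ G k lam p L f v) :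
    ∀ j : Fin k, sInf (Set.range f) ≤ u j ∧ u j ≤ sSup (Set.range f) := by
  have hkne : Nonempty (Fin k) := ⟨⟨0, hk⟩⟩
  set m := sInf (Set.range f) with hm
  set M := sSup (Set.range f) with hM
  have hrne : (Set.range f).Nonempty := Set.range_nonempty f
  have hfin : (Set.range f).Finite := Set.finite_range f
  have hml : ∀ i, m ≤ f i := fun i => csInf_le hfin.bddBelow ⟨i, rfl⟩
  have hMl : ∀ i, f i ≤ M := fun i => le_csSup hfin.bddAbove ⟨i, rfl⟩
  have hmM : m ≤ M := (hml ⟨0, hk⟩).trans (hMl ⟨0, hk⟩)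
  set c : ℝ → ℝ := fun x => max m (min x M) with hc
  -- clamp is 1-Lipschitz
  have hlip : ∀ a b : ℝ, |c a - c b| ≤ |a - b| := by
    intro a b
    calc |c a - c b| ≤ |min a M - min b M| := by
          rw [hc]
          simpa [max_comm] using abs_max_sub_max_le_abs (min a M) (min b M) m
      _ ≤ max |a - b| |M - M| := abs_min_sub_min_le_max a M b M
      _ = |a - b| := by simp
  -- clamp doesn't increase fidelity
  have hfid : ∀ i : Fin k, |f i - c (u i)| ≤ |f i - u i| := by
    intro i
    rcases le_total (u i) m with h1 | h1
    · have : c (u i) = m := by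
        rw [hc]; simp [min_eq_left (h1.trans hmM), max_eq_left h1]
      rw [this, abs_of_nonneg (by linarith [hml i]), abs_of_nonneg (by linarith [hml i])]
      linarith
    · rcases le_total M (u i) with h2 | h2
      · have : c (u i) = M := by
          rw [hc]; simp [min_eq_right h2, max_eq_right hmM]
        rw [this, abs_of_nonpos (by linarith [hMl i]), abs_of_nonpos (by linarith [hMl i])]
        linarith
      · have : c (u i) = u i := by
          rw [hc]; simp [min_eq_left h2, max_eq_right h1]
        rw [this]
  have key : ∀ j : Fin k, ¬(u j < m ∨ M < u j) := by
    intro j hj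
    -- strict decrease of fidelity at j
    have hstrict : |f j - c (u j)| < |f j - u j| := by
      rcases hj with h1 | h1
      · have : c (u j) = m := by
          rw [hc]; simp [min_eq_left (h1.le.trans hmM), max_eq_left h1.le]
        rw [this, abs_of_nonneg (by linarith [hml j]), abs_of_nonneg (by linarith [hml j])]
        linarith
      · have : c (u j) = M := by
          rw [hc]; simp [min_eq_right h1.le, max_eq_right hmM]
        rw [this, abs_of_nonpos (by linarith [hMl j]), abs_of_nonpos (by linarith [hMl j])]
        linarith
    set v : Fin k → ℝ := fun i => c (u i) with hv
    have hTV : (∑ i : Fin k, if i.val = 0 then 0 else |v i - v (pred i)|) ≤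
        (∑ i : Fin k, if i.val = 0 then 0 else |u i - u (pred i)|) := by
      apply Finset.sum_le_sum
      intro i _
      by_cases h : i.val = 0
      · simp [h]
      · simp only [h, if_false]
        exact hlip (u i) (u (pred i))
    have hF : (∑ i : Fin k, L i * |f i - v i| ^ p) <
        (∑ i : Fin k, L i * |f i - u i| ^ p) := by
      apply Finset.sum_lt_sum
      · intro i _
        have := hfid i
        have h1 : |f i - v i| ^ p ≤ |f i - u i| ^ p :=
          Real.rpow_le_rpow (abs_nonneg _) this (by linarith)
        nlinarith [hL i]
      · refine ⟨j, Finset.mem_univ j, ?_⟩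
        have h1 : |f j - v j| ^ p < |f j - u j| ^ p :=
          Real.rpow_lt_rpow (abs_nonneg _) hstrict (by linarith)
        have := hL j
        nlinarith
    have hlt : G k lam p L f v < G k lam p L f u := by
      unfold G
      have := mul_lt_mul_of_pos_left hF hlam
      linarith
    exact absurd (hu v) (not_le.mpr hlt)
  intro j
  have := key j
  push_neg at this
  exact this
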